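/- Let G be an abelian group and S a finite generating subset with 0 ∈ S which is 2-separable with κ₂(S) ≤ |S| − 1. If H is a 2-atom of S with 0 ∈ H and |H| ≥ 3, then H is a subgroup of G. -/

import Mathlib

open Set Pointwise

/-- The family S_k for the Cayley graph Γ(X) = X + S in an abelian group:
finite X with |X| ≥ k and at least k elements outside X + S. -/
def SkAdd {G : Type*} [AddCommGroup G] (S : Set G) (k : ℕ) : Set (Set G) :=
  {X | X.Finite ∧ k ≤ X.ncard ∧ ∃ Y : Set G, Y.Finite ∧ Y.ncard = k ∧ Y ⊆ (X + S)ᶜ}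

/-- S is k-separable. -/
def SepAdd {G : Type*} [AddCommGroup G] (S : Set G) (k : ℕ) : Prop := (SkAdd S k).Nonempty

/-- The k-isoperimetric connectivity κ_k(S). -/
noncomputable def kappaAdd {G : Type*} [AddCommGroup G] (S : Set G) (k : ℕ) : ℕ :=
  sInf ((fun X => (X + S).ncard - X.ncard) '' SkAdd S k)

/-- X is a k-fragment of S. -/
def IsFragAdd {G : Type*} [AddCommGroup G] (S : Set G) (k : ℕ) (X : Set G) : Prop :=
  X ∈ SkAdd S k ∧ (X + S).ncard - X.ncard = kappaAdd S k

/-- X is a k-atom of S. -/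
def IsAtomAdd {G : Type*} [AddCommGroup G] (S : Set G) (k : ℕ) (X : Set G) : Prop :=
  IsFragAdd S k X ∧ ∀ Y, IsFragAdd S k Y → X.ncard ≤ Y.ncard

/-- S is k-faithful: any k-atom A satisfies |A| ≤ |G \ (A + S)|. -/
def FaithfulAdd {G : Type*} [AddCommGroup G] (S : Set G) (k : ℕ) : Prop :=
  ∀ A : Set G, IsAtomAdd S k A → ((A + S)ᶜ).Infinite ∨ A.ncard ≤ ((A + S)ᶜ).ncard

/-- A is an arithmetic progression {a, a+d, ..., a+md}. -/
def IsAP {G : Type*} [AddCommGroup G] (A : Set G) : Prop :=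
  ∃ a d : G, ∃ m : ℕ, A = (fun i : ℕ => a + i • d) '' {i | i ≤ m}

/-- S is a Vosper subset: non-2-separable or κ₂(S) ≥ |S|. -/
def IsVosper {G : Type*} [AddCommGroup G] (S : Set G) : Prop :=
  ¬ SepAdd S 2 ∨ S.ncard ≤ kappaAdd S 2

/-- H is a hyper-atom of S: a subgroup which is a 1-fragment, of maximal cardinality
among subgroups which are 1-fragments. -/
def IsHyperAtom {G : Type*} [AddCommGroup G] (S : Set G) (H : AddSubgroup G) : Prop :=
  IsFragAdd S 1 ↑H ∧
    ∀ K : AddSubgroup G, IsFragAdd S 1 ↑K → (K : Set G).ncard ≤ (H : Set G).ncard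

/-- C is an H-component of S: a non-empty set of the form S ∩ (x + H). -/
def IsComponent {G : Type*} [AddCommGroup G] (H : AddSubgroup G) (S C : Set G) : Prop :=
  C.Nonempty ∧ ∃ x : G, C = S ∩ ({x} + (H : Set G))

/-- C is a smaller H-component of S: an H-component of minimal cardinality. -/
def IsSmallerComponent {G : Type*} [AddCommGroup G] (H : AddSubgroup G) (S C : Set G) : Prop :=
  IsComponent H S C ∧ ∀ C', IsComponent H S C' → C.ncard ≤ C'.ncard

/-- The k-fold sumset kS = S + ⋯ + S (with 0S = {0}). -/
def iterSum {G : Type*} [AddCommGroup G] (S : Set G) : ℕ → Set G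
  | 0 => {0}
  | n + 1 => iterSum S n + S

/-- A is aperiodic: its period {x : x + A = A} is trivial. -/
def IsAperiodic {G : Type*} [AddCommGroup G] (A : Set G) : Prop :=
  ∀ x : G, {x} + A = A → x = 0

namespace Stmt8
set_option linter.unusedSectionVars false

variable {G : Type*} [AddCommGroup G]

lemma two_le_ncard {s : Set G} (hs : s.Finite) {u v : G} (hu : u ∈ s) (hv : v ∈ s)
    (huv : u ≠ v) : 2 ≤ s.ncard := by
  have hsub : ({u, v} : Set G) ⊆ s := by
    intro x hx
    simp only [Set.mem_insert_iff, Set.mem_singleton_iff] at hx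
    rcases hx with rfl | rfl
    · exact hu
    · exact hv
  have h := Set.ncard_le_ncard hsub hs
  rwa [Set.ncard_pair huv] at h

lemma ncard_le_one_of_subsingleton {s : Set G} (hs : s.Subsingleton) : s.ncard ≤ 1 := by
  rcases hs.eq_empty_or_singleton with rfl | ⟨a, rfl⟩ <;> simp

lemma sum_fin {S X : Set G} (hS : S.Finite) (hX : X.Finite) : (X + S).Finite := hX.add hS

lemma subset_sum {S X : Set G} (h0 : (0 : G) ∈ S) : X ⊆ X + S := fun x hx => by
  simpa using Set.add_mem_add hx h0

lemma sadd_card (g : G) (X : Set G) : ({g} + X).ncard = X.ncard := by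
  rw [Set.singleton_add, Set.ncard_image_of_injective _ (add_right_injective g)]

lemma sadd_fin {g : G} {X : Set G} (hX : X.Finite) : ({g} + X).Finite := by
  rw [Set.singleton_add]; exact hX.image _

lemma sadd_assoc (g : G) (X S : Set G) : ({g} + X) + S = {g} + (X + S) := add_assoc _ _ _

lemma mem_sadd' {g x : G} {X : Set G} : x ∈ ({g} : Set G) + X ↔ -g + x ∈ X := by
  constructor
  · intro h
    rcases Set.mem_add.mp h with ⟨u, hu, a, ha, rfl⟩
    rcases hu with rfl
    simpa using ha
  · intro h
    exact Set.mem_add.mpr ⟨g, rfl, -g + x, h, by abel⟩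

lemma sadd_compl (g : G) (X : Set G) : (({g} : Set G) + X)ᶜ = {g} + Xᶜ := by
  ext x
  simp only [Set.mem_compl_iff, mem_sadd']

lemma sadd_inter (g : G) (X Y : Set G) :
    ({g} : Set G) + (X ∩ Y) = (({g} : Set G) + X) ∩ ({g} + Y) := by
  ext x
  simp only [Set.mem_inter_iff, mem_sadd']

lemma sadd_sadd (g h : G) (X : Set G) :
    ({g} : Set G) + (({h} : Set G) + X) = ({g + h} : Set G) + X := by
  rw [← add_assoc, Set.singleton_add_singleton]

lemma neg_card (X : Set G) : (-X).ncard = X.ncard := Set.ncard_neg X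

lemma neg_sum (X S : Set G) : -(X + S) = (-X) + (-S) := by rw [neg_add_rev, add_comm]

lemma neg_compl (X : Set G) : (-X)ᶜ = -(Xᶜ) := by
  ext x; simp [Set.mem_neg]

lemma neg_fin {X : Set G} (h : X.Finite) : (-X).Finite := by
  rw [← Set.image_neg_eq_neg]; exact h.image _

lemma zero_mem_neg {S : Set G} (h0 : (0 : G) ∈ S) : (0 : G) ∈ -S := by
  rw [Set.mem_neg, neg_zero]; exact h0

lemma kappa_le' {S X : Set G} (hS : S.Finite) (h0 : (0 : G) ∈ S) (hX : X ∈ SkAdd S 2) :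
    X.ncard + kappaAdd S 2 ≤ (X + S).ncard := by
  have h1 : kappaAdd S 2 ≤ (X + S).ncard - X.ncard := Nat.sInf_le ⟨X, hX, rfl⟩
  have h2 : X.ncard ≤ (X + S).ncard := Set.ncard_le_ncard (subset_sum h0) (sum_fin hS hX.1)
  omega

lemma frag_card {S F : Set G} (hS : S.Finite) (h0 : (0 : G) ∈ S) (hF : IsFragAdd S 2 F) :
    (F + S).ncard = F.ncard + kappaAdd S 2 := by
  have h2 : F.ncard ≤ (F + S).ncard := Set.ncard_le_ncard (subset_sum h0) (sum_fin hS hF.1.1)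
  have := hF.2; omega

lemma frag_of {S X : Set G} (hS : S.Finite) (h0 : (0 : G) ∈ S) (hX : X ∈ SkAdd S 2)
    (h : (X + S).ncard ≤ X.ncard + kappaAdd S 2) : IsFragAdd S 2 X := by
  have := kappa_le' hS h0 hX
  exact ⟨hX, by omega⟩

lemma S2_translate {S X : Set G} (g : G) (hX : X ∈ SkAdd S 2) : ({g} + X) ∈ SkAdd S 2 := by
  obtain ⟨hfin, h2, Y, hYf, hY2, hYsub⟩ := hX
  refine ⟨sadd_fin hfin, by rwa [sadd_card], {g} + Y, sadd_fin hYf, by rwa [sadd_card], ?_⟩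
  rw [sadd_assoc, sadd_compl]
  exact Set.add_subset_add_left hYsub

lemma frag_translate {S X : Set G} (g : G) (hX : IsFragAdd S 2 X) :
    IsFragAdd S 2 ({g} + X) := by
  refine ⟨S2_translate g hX.1, ?_⟩
  rw [sadd_assoc, sadd_card, sadd_card]
  exact hX.2

lemma S2_neg {S X : Set G} (hX : X ∈ SkAdd S 2) : (-X) ∈ SkAdd (-S) 2 := by
  obtain ⟨hfin, h2, Y, hYf, hY2, hYsub⟩ := hX
  refine ⟨neg_fin hfin, by rwa [neg_card], -Y, neg_fin hYf, by rwa [neg_card], ?_⟩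
  rw [← neg_sum, neg_compl]
  exact Set.neg_subset_neg.mpr hYsub

lemma kappa_neg (S : Set G) : kappaAdd (-S) 2 = kappaAdd S 2 := by
  unfold kappaAdd
  congr 1
  ext k
  simp only [Set.mem_image]
  constructor
  · rintro ⟨X, hX, rfl⟩
    have h1 : -X ∈ SkAdd S 2 := by
      have := S2_neg (S := -S) hX
      rwa [neg_neg] at this
    refine ⟨-X, h1, ?_⟩
    rw [show (-X) + S = -(X + -S) by rw [neg_sum, neg_neg], neg_card, neg_card]
  · rintro ⟨X, hX, rfl⟩
    refine ⟨-X, S2_neg hX, ?_⟩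
    rw [show (-X) + (-S) = -(X + S) from (neg_sum X S).symm, neg_card, neg_card]

lemma frag_neg {S Y : Set G} (hY : IsFragAdd (-S) 2 Y) : IsFragAdd S 2 (-Y) := by
  constructor
  · have := S2_neg (S := -S) hY.1
    rwa [neg_neg] at this
  · rw [show (-Y) + S = -(Y + -S) by rw [neg_sum, neg_neg], neg_card, neg_card, hY.2, kappa_neg]

lemma submod {S X Y : Set G} (hS : S.Finite) (hX : X.Finite) (hY : Y.Finite) :
    ((X ∪ Y) + S).ncard + ((X ∩ Y) + S).ncard ≤ (X + S).ncard + (Y + S).ncard := by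
  have h1 : (X ∪ Y) + S = (X + S) ∪ (Y + S) := Set.union_add
  have h2 : (X ∩ Y) + S ⊆ (X + S) ∩ (Y + S) := by
    rintro z hz
    rcases Set.mem_add.mp hz with ⟨w, hw, s, hs, rfl⟩
    exact ⟨Set.add_mem_add hw.1 hs, Set.add_mem_add hw.2 hs⟩
  calc ((X ∪ Y) + S).ncard + ((X ∩ Y) + S).ncard
      ≤ ((X + S) ∪ (Y + S)).ncard + ((X + S) ∩ (Y + S)).ncard := by
        rw [h1]
        exact add_le_add_right
          (Set.ncard_le_ncard h2 ((sum_fin hS hX).inter_of_left _)) _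
    _ = (X + S).ncard + (Y + S).ncard :=
        Set.ncard_union_add_ncard_inter _ _ (sum_fin hS hX) (sum_fin hS hY)

lemma small_of_no2 {C : Set G} (h : ¬ ∃ Y : Set G, Y.Finite ∧ Y.ncard = 2 ∧ Y ⊆ C) :
    C.Finite ∧ C.ncard ≤ 1 := by
  rcases C.finite_or_infinite with hC | hC
  · refine ⟨hC, ?_⟩
    by_contra hc
    obtain ⟨Y, hYsub, hY2⟩ := Set.exists_subset_card_eq (show 2 ≤ C.ncard by omega)
    exact h ⟨Y, hC.subset hYsub, hY2, hYsub⟩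
  · obtain ⟨Y, hYsub, hYfin, hY2⟩ := hC.exists_subset_ncard_eq 2
    exact absurd ⟨Y, hYfin, hY2, hYsub⟩ h

lemma gtrick {S U : Set G} {g : G} (hg : g ∉ U + S) : ({g} : Set G) + (-S) ⊆ Uᶜ := by
  intro x hx
  rw [mem_sadd', Set.mem_neg] at hx
  intro hxU
  have hmem := Set.add_mem_add hxU hx
  rw [show x + -(-g + x) = g by abel] at hmem
  exact hg hmem


lemma faith {S A F : Set G} [Finite G] (hS : S.Finite) (h0 : (0 : G) ∈ S)
    (hA : IsAtomAdd S 2 A) (hF : IsFragAdd S 2 F) :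
    F.ncard + kappaAdd S 2 + A.ncard ≤ Nat.card G := by
  have h0n : (0 : G) ∈ -S := zero_mem_neg h0
  have hSn : (-S).Finite := neg_fin hS
  have hFS : (F + S).ncard = F.ncard + kappaAdd S 2 := frag_card hS h0 hF
  have hcompl : (F + S).ncard + ((F + S)ᶜ).ncard = Nat.card G :=
    Set.ncard_add_ncard_compl _ (Set.toFinite _) (Set.toFinite _)
  obtain ⟨Y₀, hY₀f, hY₀2, hY₀sub⟩ := hF.1.2.2
  have hY2 : 2 ≤ ((F + S)ᶜ).ncard := by
    have := Set.ncard_le_ncard hY₀sub (Set.toFinite _)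
    omega
  have hYS2 : (F + S)ᶜ ∈ SkAdd (-S) 2 := by
    refine ⟨Set.toFinite _, hY2, ?_⟩
    obtain ⟨F₀, hF₀sub, hF₀2⟩ := Set.exists_subset_card_eq hF.1.2.1
    refine ⟨F₀, Set.toFinite _, hF₀2, fun x hx hmem => ?_⟩
    rcases Set.mem_add.mp hmem with ⟨y, hy, t, ht, rfl⟩
    rw [Set.mem_neg] at ht
    have : y = (y + t) + (-t) := by abel
    exact hy (by rw [this]; exact Set.add_mem_add (hF₀sub hx) ht)
  have hsub1 : (F + S)ᶜ + (-S) ⊆ Fᶜ := by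
    rintro z hz
    rcases Set.mem_add.mp hz with ⟨y, hy, t, ht, rfl⟩
    rw [Set.mem_neg] at ht
    intro hzF
    have : y = (y + t) + (-t) := by abel
    exact hy (by rw [this]; exact Set.add_mem_add hzF ht)
  have hFc : F.ncard + (Fᶜ).ncard = Nat.card G :=
    Set.ncard_add_ncard_compl _ (Set.toFinite _) (Set.toFinite _)
  have hle : ((F + S)ᶜ + (-S)).ncard ≤ (Fᶜ).ncard :=
    Set.ncard_le_ncard hsub1 (Set.toFinite _)
  have hk : ((F + S)ᶜ).ncard + kappaAdd (-S) 2 ≤ ((F + S)ᶜ + (-S)).ncard :=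
    kappa_le' hSn h0n hYS2
  rw [kappa_neg] at hk
  have hYfrag : IsFragAdd (-S) 2 ((F + S)ᶜ) := by
    refine frag_of hSn h0n hYS2 ?_
    rw [kappa_neg]
    omega
  have hmin : A.ncard ≤ (-(F + S)ᶜ).ncard := hA.2 _ (frag_neg hYfrag)
  rw [neg_card] at hmin
  omega

lemma lemmaL {S A F : Set G} (hS : S.Finite) (h0 : (0 : G) ∈ S)
    (hκ : kappaAdd S 2 + 1 ≤ S.ncard)
    (hA : IsAtomAdd S 2 A) (hF : IsFragAdd S 2 F)
    (h2 : 2 ≤ (A ∩ F).ncard) : A ⊆ F := by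
  have hAfin : A.Finite := hA.1.1.1
  have hFfin : F.Finite := hF.1.1
  have hAS : (A + S).ncard = A.ncard + kappaAdd S 2 := frag_card hS h0 hA.1
  have hFS : (F + S).ncard = F.ncard + kappaAdd S 2 := frag_card hS h0 hF
  have hIfin : (A ∩ F).Finite := hAfin.inter_of_left _
  have hJfin : (A ∪ F).Finite := hAfin.union hFfin
  have hIS2 : (A ∩ F) ∈ SkAdd S 2 := by
    obtain ⟨Y₀, hY₀f, hY₀2, hY₀sub⟩ := hA.1.1.2.2
    refine ⟨hIfin, h2, Y₀, hY₀f, hY₀2, hY₀sub.trans ?_⟩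
    exact Set.compl_subset_compl.mpr (Set.add_subset_add_right Set.inter_subset_left)
  have hkI : (A ∩ F).ncard + kappaAdd S 2 ≤ ((A ∩ F) + S).ncard := kappa_le' hS h0 hIS2
  have hsub := submod (X := A) (Y := F) hS hAfin hFfin
  have hcupI : (A ∪ F).ncard + (A ∩ F).ncard = A.ncard + F.ncard :=
    Set.ncard_union_add_ncard_inter _ _ hAfin hFfin
  have finish : ((A ∩ F) + S).ncard ≤ (A ∩ F).ncard + kappaAdd S 2 → A ⊆ F := by
    intro hle
    have hfrag : IsFragAdd S 2 (A ∩ F) := frag_of hS h0 hIS2 hle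
    have hmin : A.ncard ≤ (A ∩ F).ncard := hA.2 _ hfrag
    have heq : A ∩ F = A := Set.eq_of_subset_of_ncard_le Set.inter_subset_left hmin hAfin
    have h' := Set.inter_subset_right (s := A) (t := F)
    rwa [heq] at h'
  by_cases hJ : ∃ Y : Set G, Y.Finite ∧ Y.ncard = 2 ∧ Y ⊆ ((A ∪ F) + S)ᶜ
  · have hJS2 : (A ∪ F) ∈ SkAdd S 2 := by
      refine ⟨hJfin, ?_, hJ⟩
      exact le_trans h2 (Set.ncard_le_ncard (Set.inter_subset_left.trans Set.subset_union_left)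
        hJfin)
    have hkJ := kappa_le' hS h0 hJS2
    exact finish (by omega)
  · obtain ⟨hCfin, hC1⟩ := small_of_no2 hJ
    have hGfin : (Set.univ : Set G).Finite := by
      rw [← Set.union_compl_self ((A ∪ F) + S)]
      exact (sum_fin hS hJfin).union hCfin
    haveI : Finite G := Set.finite_univ_iff.mp hGfin
    have hNc : ((A ∪ F) + S).ncard + (((A ∪ F) + S)ᶜ).ncard = Nat.card G :=
      Set.ncard_add_ncard_compl _ (Set.toFinite _) (Set.toFinite _)
    have hfaithF : F.ncard + kappaAdd S 2 + A.ncard ≤ Nat.card G := faith hS h0 hA hF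
    rcases (by omega : (((A ∪ F) + S)ᶜ).ncard = 0 ∨ (((A ∪ F) + S)ᶜ).ncard = 1) with h0c | h1c
    · exfalso; omega
    · obtain ⟨g, hg⟩ := Set.ncard_eq_one.mp h1c
      have hgmem : g ∉ (A ∪ F) + S := by
        rw [← Set.mem_compl_iff, hg]; rfl
      have hgt : ({g} : Set G) + (-S) ⊆ (A ∪ F)ᶜ := gtrick hgmem
      have hgcard : (({g} : Set G) + (-S)).ncard = S.ncard := by rw [sadd_card, neg_card]
      have hUc : (A ∪ F).ncard + ((A ∪ F)ᶜ).ncard = Nat.card G :=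
        Set.ncard_add_ncard_compl _ (Set.toFinite _) (Set.toFinite _)
      have hmle : S.ncard ≤ ((A ∪ F)ᶜ).ncard := by
        rw [← hgcard]; exact Set.ncard_le_ncard hgt (Set.toFinite _)
      exact finish (by omega)


/-- The key overlap lemma: if a 2-atom `A` and its translate `{x}+A` meet in exactly
one point `p`, then `κ₂ + 1 = |S|` and `(A+S) ∩ ({x}+(A+S)) = {p} + S`. -/
lemma pairlemma {S A : Set G} (hS : S.Finite) (h0 : (0 : G) ∈ S)
    (hκ : kappaAdd S 2 + 1 ≤ S.ncard)
    (hA : IsAtomAdd S 2 A) {x p : G} (hsing : A ∩ ({x} + A) = {p}) :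
    kappaAdd S 2 + 1 = S.ncard ∧ (A + S) ∩ ({x} + (A + S)) = {p} + S := by
  have hAfin : A.Finite := hA.1.1.1
  have hBfrag : IsFragAdd S 2 ({x} + A) := frag_translate x hA.1
  have hBfin : ({x} + A).Finite := sadd_fin hAfin
  have hAS : (A + S).ncard = A.ncard + kappaAdd S 2 := frag_card hS h0 hA.1
  have hBS : (({x} + A) + S).ncard = A.ncard + kappaAdd S 2 := by
    rw [sadd_assoc, sadd_card, hAS]
  have hUfin : (A ∪ ({x} + A)).Finite := hAfin.union hBfin
  have hU : (A ∪ ({x} + A)).ncard + 1 = 2 * A.ncard := by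
    have h := Set.ncard_union_add_ncard_inter A ({x} + A) hAfin hBfin
    rw [hsing, Set.ncard_singleton, sadd_card] at h
    omega
  have hp : p ∈ A ∩ ({x} + A) := by rw [hsing]; rfl
  have hpS_sub : ({p} : Set G) + S ⊆ (A + S) ∩ ({x} + (A + S)) := by
    rintro z hz
    rcases Set.mem_add.mp hz with ⟨u, hu, s, hs, rfl⟩
    rcases hu with rfl
    constructor
    · exact Set.add_mem_add hp.1 hs
    · rw [mem_sadd']
      have h1 : -x + u ∈ A := mem_sadd'.mp hp.2
      have : -x + (u + s) = (-x + u) + s := by abel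
      rw [this]
      exact Set.add_mem_add h1 hs
  have hpScard : (({p} : Set G) + S).ncard = S.ncard := sadd_card p S
  have hIfin : ((A + S) ∩ ({x} + (A + S))).Finite := (sum_fin hS hAfin).inter_of_left _
  have hIm : S.ncard ≤ ((A + S) ∩ ({x} + (A + S))).ncard := by
    rw [← hpScard]; exact Set.ncard_le_ncard hpS_sub hIfin
  have hUS : ((A ∪ ({x} + A)) + S).ncard + ((A + S) ∩ ({x} + (A + S))).ncard
      = 2 * (A.ncard + kappaAdd S 2) := by
    have h1 : (A ∪ ({x} + A)) + S = (A + S) ∪ (({x} + A) + S) := Set.union_add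
    have h := Set.ncard_union_add_ncard_inter (A + S) ({x} + (A + S))
      (sum_fin hS hAfin) (sadd_fin (sum_fin hS hAfin))
    rw [h1, sadd_assoc]
    rw [hAS] at h
    rw [show ({x} + (A + S)).ncard = A.ncard + kappaAdd S 2 by rw [sadd_card, hAS]] at h
    omega
  have setend : ((A + S) ∩ ({x} + (A + S))).ncard ≤ S.ncard →
      (A + S) ∩ ({x} + (A + S)) = ({p} : Set G) + S := by
    intro hle
    exact (Set.eq_of_subset_of_ncard_le hpS_sub (by rw [hpScard]; exact hle) hIfin).symm
  have h2n : 2 ≤ A.ncard := hA.1.1.2.1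
  by_cases hJ : ∃ Y : Set G, Y.Finite ∧ Y.ncard = 2 ∧ Y ⊆ ((A ∪ ({x} + A)) + S)ᶜ
  · have hUS2 : (A ∪ ({x} + A)) ∈ SkAdd S 2 := ⟨hUfin, by omega, hJ⟩
    have hkU := kappa_le' hS h0 hUS2
    exact ⟨by omega, setend (by omega)⟩
  · obtain ⟨hCfin, hC1⟩ := small_of_no2 hJ
    have hGfin : (Set.univ : Set G).Finite := by
      rw [← Set.union_compl_self ((A ∪ ({x} + A)) + S)]
      exact (sum_fin hS hUfin).union hCfin
    haveI : Finite G := Set.finite_univ_iff.mp hGfin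
    have hNc : ((A ∪ ({x} + A)) + S).ncard + (((A ∪ ({x} + A)) + S)ᶜ).ncard = Nat.card G :=
      Set.ncard_add_ncard_compl _ (Set.toFinite _) (Set.toFinite _)
    rcases (by omega : (((A ∪ ({x} + A)) + S)ᶜ).ncard = 0 ∨
        (((A ∪ ({x} + A)) + S)ᶜ).ncard = 1) with h0c | h1c
    · exfalso
      have hfaithA := faith hS h0 hA hA.1
      omega
    · obtain ⟨g, hg⟩ := Set.ncard_eq_one.mp h1c
      have hgmem : g ∉ (A ∪ ({x} + A)) + S := by
        rw [← Set.mem_compl_iff, hg]; rfl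
      have hgt : ({g} : Set G) + (-S) ⊆ (A ∪ ({x} + A))ᶜ := gtrick hgmem
      have hUc : (A ∪ ({x} + A)).ncard + ((A ∪ ({x} + A))ᶜ).ncard = Nat.card G :=
        Set.ncard_add_ncard_compl _ (Set.toFinite _) (Set.toFinite _)
      have hmle : S.ncard ≤ ((A ∪ ({x} + A))ᶜ).ncard := by
        have : (({g} : Set G) + (-S)).ncard = S.ncard := by rw [sadd_card, neg_card]
        rw [← this]; exact Set.ncard_le_ncard hgt (Set.toFinite _)
      exact ⟨by omega, setend (by omega)⟩

end Stmt8

set_option maxHeartbeats 1000000 in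
open Stmt8 in
theorem stmt8 {G : Type*} [AddCommGroup G] (S : Set G) (hfin : S.Finite)
    (h0 : (0 : G) ∈ S) (hgen : AddSubgroup.closure S = ⊤)
    (hsep : SepAdd S 2) (hkappa : kappaAdd S 2 < S.ncard)
    (H : Set G) (hH : IsAtomAdd S 2 H) (h0H : (0 : G) ∈ H) (h3 : 3 ≤ H.ncard) :
    ∃ H' : AddSubgroup G, H = ↑H' := by
  classical
  by_cases hall : ∀ a ∈ H, ({a} : Set G) + H = H
  · refine ⟨{  carrier := H
               add_mem' := ?_
               zero_mem' := h0H
               neg_mem' := ?_ }, rfl⟩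
    · intro a b ha hb
      rw [← hall a ha]
      exact Set.add_mem_add rfl hb
    · intro a ha
      have h0' : (0 : G) ∈ ({a} : Set G) + H := by rw [hall a ha]; exact h0H
      have := mem_sadd'.mp h0'
      simpa using this
  · exfalso
    push_neg at hall
    obtain ⟨a₀, ha₀, hbad⟩ := hall
    have hκ' : kappaAdd S 2 + 1 ≤ S.ncard := hkappa
    have hAfin : H.Finite := hH.1.1.1
    have hatom_tr : ∀ g : G, IsAtomAdd S 2 ({g} + H) := fun g =>
      ⟨frag_translate g hH.1, fun Y hY => by rw [sadd_card]; exact hH.2 Y hY⟩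
    have hself : ∀ g : G, g ∈ H → g ∈ ({g} : Set G) + H :=
      fun g hg => mem_sadd'.mpr (by simpa using h0H)
    -- Sidon property
    have SID : ∀ x : G, x ≠ 0 → (H ∩ ({x} + H)).Subsingleton := by
      intro x hx0 u hu v hv
      by_contra huv
      have h2' : 2 ≤ (H ∩ ({x} + H)).ncard :=
        two_le_ncard (hAfin.inter_of_left _) hu hv huv
      have hfx : IsFragAdd S 2 ({x} + H) := frag_translate x hH.1
      have hsub1 : H ⊆ {x} + H := lemmaL hfin h0 hκ' hH hfx h2'
      have hsub2 : ({x} : Set G) + H ⊆ H := by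
        refine lemmaL hfin h0 hκ' (hatom_tr x) hH.1 ?_
        rwa [Set.inter_comm]
      have heq : ({x} : Set G) + H = H := hsub2.antisymm hsub1
      have hxH : x ∈ H := by
        rw [← heq]
        exact mem_sadd'.mpr (by simpa using h0H)
      have m1 : a₀ ∈ H ∩ (({a₀} : Set G) + H) := ⟨ha₀, hself a₀ ha₀⟩
      have m2 : a₀ + x ∈ H ∩ (({a₀} : Set G) + H) := by
        constructor
        · rw [← heq, mem_sadd']
          rw [show -x + (a₀ + x) = a₀ by abel]
          exact ha₀
        · rw [mem_sadd']
          rw [show -a₀ + (a₀ + x) = x by abel]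
          exact hxH
      have hne : a₀ ≠ a₀ + x := by
        intro h
        exact hx0 (by simpa using h.symm)
      have h2'' : 2 ≤ (H ∩ (({a₀} : Set G) + H)).ncard :=
        two_le_ncard (hAfin.inter_of_left _) m1 m2 hne
      have hfa : IsFragAdd S 2 ({a₀} + H) := frag_translate a₀ hH.1
      have hs1 : H ⊆ {a₀} + H := lemmaL hfin h0 hκ' hH hfa h2''
      have hs2 : ({a₀} : Set G) + H ⊆ H := by
        refine lemmaL hfin h0 hκ' (hatom_tr a₀) hH.1 ?_
        rwa [Set.inter_comm]
      exact hbad (hs2.antisymm hs1)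
    have hsingleton : ∀ x q : G, x ≠ 0 → q ∈ H → -x + q ∈ H →
        H ∩ ({x} + H) = {q} := by
      intro x q hx0 hq hq2
      apply Set.eq_singleton_iff_unique_mem.mpr
      exact ⟨⟨hq, mem_sadd'.mpr hq2⟩, fun y hy => SID x hx0 hy ⟨hq, mem_sadd'.mpr hq2⟩⟩
    -- choose a b distinct nonzero in H
    have hd0 : (H \ {0}).ncard + 1 = H.ncard :=
      Set.ncard_diff_singleton_add_one h0H hAfin
    have hdfin : (H \ {0}).Finite := hAfin.diff
    obtain ⟨a, b, haa, hbb, hab⟩ :=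
      (Set.one_lt_ncard_iff hdfin).mp (by omega)
    obtain ⟨haH, ha0'⟩ := haa
    obtain ⟨hbH, hb0'⟩ := hbb
    have ha0 : a ≠ 0 := by simpa using ha0'
    have hb0 : b ≠ 0 := by simpa using hb0'
    have hba0 : b - a ≠ 0 := sub_ne_zero.mpr (Ne.symm hab)
    -- the three singleton intersections
    have hsa : H ∩ ({a} + H) = {a} := hsingleton a a ha0 haH (by simpa using h0H)
    have hsb : H ∩ ({b} + H) = {b} := hsingleton b b hb0 hbH (by simpa using h0H)
    have hsba : H ∩ ({b - a} + H) = {b} := by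
      refine hsingleton (b - a) b hba0 hbH ?_
      rw [show -(b - a) + b = a by abel]
      exact haH
    -- pair lemma applications
    obtain ⟨hκm, h1⟩ := pairlemma hfin h0 hκ' hH hsa
    obtain ⟨-, h2⟩ := pairlemma hfin h0 hκ' hH hsb
    obtain ⟨-, h3'⟩ := pairlemma hfin h0 hκ' hH hsba
    -- notation
    set W := H + S with hWdef
    set n := H.ncard with hndef
    set m := S.ncard with hmdef
    set κ := kappaAdd S 2 with hκdef
    have hWfin : W.Finite := sum_fin hfin hAfin
    have hWcard : W.ncard = n + κ := frag_card hfin h0 hH.1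
    have hSW : S ⊆ W := by
      intro s hs
      have := Set.add_mem_add h0H hs
      simpa using this
    -- translate h3' by a
    have hWab : ({a} + W) ∩ ({b} + W) = ({a + b} : Set G) + S := by
      have := congrArg (fun Z => ({a} : Set G) + Z) h3'
      try simp only at this
      rw [sadd_inter, sadd_sadd, sadd_sadd] at this
      rw [show a + (b - a) = b by abel] at this
      exact this
    -- the ({a}+H) ∩ ({b}+H) singleton
    have hsab : (({a} : Set G) + H) ∩ ({b} + H) = {a + b} := by
      have := congrArg (fun Z => ({a} : Set G) + Z) hsba
      try simp only at this
      rw [sadd_inter, sadd_sadd] at this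
      rw [show a + (b - a) = b by abel] at this
      rw [this, Set.singleton_add_singleton]
    -- T
    set T := (({a} : Set G) + S) ∩ (({b} : Set G) + S) with hTdef
    set t := T.ncard with htdef
    have hT3 : (({b} : Set G) + S) ∩ (({a + b} : Set G) + S) = T := by
      rw [hTdef, ← h1, ← h2, ← hWab]
      ext z
      simp only [Set.mem_inter_iff]
      tauto
    have htm : t ≤ m := by
      have : T ⊆ ({a} : Set G) + S := Set.inter_subset_left
      have h := Set.ncard_le_ncard this (sadd_fin hfin)
      rwa [sadd_card] at h
    -- V and its cardinalities
    set V := (H ∪ ({a} + H)) ∪ ({b} + H) with hVdef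
    have hVfin : V.Finite := (hAfin.union (sadd_fin hAfin)).union (sadd_fin hAfin)
    have hu1 : (H ∪ ({a} + H)).ncard + 1 = 2 * n := by
      have h := Set.ncard_union_add_ncard_inter H ({a} + H) hAfin (sadd_fin hAfin)
      rw [hsa, Set.ncard_singleton, sadd_card] at h
      omega
    have hinter2 : (H ∪ ({a} + H)) ∩ ({b} + H) = ({b} : Set G) ∪ {a + b} := by
      rw [Set.union_inter_distrib_right, hsb, hsab]
    have hbab : b ≠ a + b := by
      intro h
      exact ha0 (by simpa using h)
    have hVcard : V.ncard + 3 = 3 * n := by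
      have h := Set.ncard_union_add_ncard_inter (H ∪ ({a} + H)) ({b} + H)
        (hAfin.union (sadd_fin hAfin)) (sadd_fin hAfin)
      rw [hinter2, ← hVdef] at h
      rw [show ({b} : Set G) ∪ {a + b} = ({b, a + b} : Set G) by rfl] at h
      rw [Set.ncard_pair hbab, sadd_card] at h
      omega
    -- V + S
    have hVS : V + S = (W ∪ ({a} + W)) ∪ ({b} + W) := by
      rw [hVdef, Set.union_add, Set.union_add, sadd_assoc, sadd_assoc, ← hWdef]
    have hq1 : (W ∪ ({a} + W)).ncard + m = 2 * (n + κ) := by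
      have h := Set.ncard_union_add_ncard_inter W ({a} + W) hWfin (sadd_fin hWfin)
      rw [h1] at h
      rw [sadd_card, sadd_card, hWcard] at h
      omega
    have hinter3 : (W ∪ ({a} + W)) ∩ ({b} + W)
        = (({b} : Set G) + S) ∪ (({a + b} : Set G) + S) := by
      rw [Set.union_inter_distrib_right, h2, hWab]
    have hq2 : ((({b} : Set G) + S) ∪ (({a + b} : Set G) + S)).ncard + t = 2 * m := by
      have h := Set.ncard_union_add_ncard_inter (({b} : Set G) + S) (({a + b} : Set G) + S)
        (sadd_fin hfin) (sadd_fin hfin)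
      rw [hT3, sadd_card, sadd_card] at h
      omega
    have hVScard : (V + S).ncard + 3 * m = 3 * (n + κ) + t := by
      have h := Set.ncard_union_add_ncard_inter (W ∪ ({a} + W)) ({b} + W)
        (hWfin.union (sadd_fin hWfin)) (sadd_fin hWfin)
      rw [hinter3, ← hVS, sadd_card, hWcard] at h
      omega
    -- X = {a, b}
    have hXS : ({a, b} : Set G) + S = (({a} : Set G) + S) ∪ (({b} : Set G) + S) := by
      rw [show ({a, b} : Set G) = ({a} : Set G) ∪ {b} from rfl, Set.union_add]
    have hXScard : (({a, b} : Set G) + S).ncard + t = 2 * m := by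
      have h := Set.ncard_union_add_ncard_inter (({a} : Set G) + S) (({b} : Set G) + S)
        (sadd_fin hfin) (sadd_fin hfin)
      rw [← hTdef, ← hXS, sadd_card, sadd_card] at h
      omega
    have hX2 : ({a, b} : Set G).ncard = 2 := Set.ncard_pair hab
    -- the final contradiction maker
    have hdone : (∃ Y : Set G, Y.Finite ∧ Y.ncard = 2 ∧ Y ⊆ (({a, b} : Set G) + S)ᶜ) →
        m ≤ t + 1 → False := by
      intro hw ht'
      have hXS2 : ({a, b} : Set G) ∈ SkAdd S 2 := ⟨Set.toFinite _, by rw [hX2], hw⟩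
      have hfragX : IsFragAdd S 2 ({a, b} : Set G) :=
        frag_of hfin h0 hXS2 (by rw [hX2]; omega)
      have := hH.2 _ hfragX
      rw [hX2] at this
      omega
    -- case analysis on V
    by_cases hV : ∃ Y : Set G, Y.Finite ∧ Y.ncard = 2 ∧ Y ⊆ (V + S)ᶜ
    · -- Case I
      have hVS2 : V ∈ SkAdd S 2 := ⟨hVfin, by omega, hV⟩
      have hkV := kappa_le' hfin h0 hVS2
      have hXsubV : ({a, b} : Set G) + S ⊆ V + S := by
        rw [hXS, hVS]
        apply Set.union_subset
        · exact (Set.add_subset_add_left hSW).trans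
            (Set.subset_union_right.trans Set.subset_union_left)
        · exact (Set.add_subset_add_left hSW).trans Set.subset_union_right
      obtain ⟨Y, hYf, hY2, hYsub⟩ := hV
      exact hdone ⟨Y, hYf, hY2, hYsub.trans (Set.compl_subset_compl.mpr hXsubV)⟩ (by omega)
    · obtain ⟨hCfin, hC1⟩ := small_of_no2 hV
      have hGfin : (Set.univ : Set G).Finite := by
        rw [← Set.union_compl_self (V + S)]
        exact (sum_fin hfin hVfin).union hCfin
      haveI : Finite G := Set.finite_univ_iff.mp hGfin
      have hNc : (V + S).ncard + ((V + S)ᶜ).ncard = Nat.card G :=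
        Set.ncard_add_ncard_compl _ (Set.toFinite _) (Set.toFinite _)
      have hfaithA : n + κ + n ≤ Nat.card G := by
        have := faith hfin h0 hH hH.1
        omega
      rcases (by omega : ((V + S)ᶜ).ncard = 0 ∨ ((V + S)ᶜ).ncard = 1) with h0c | h1c
      · -- Case III : V + S = G
        have key : ∀ x : G, ∃ z : G, (x ≠ 0 ∧ (H ∩ ({x} + H)).Nonempty) →
            (z ∉ W ∧ (H ∪ ({x} + H))ᶜ = {z} + (-S)) := by
          intro x
          by_cases hx : x ≠ 0 ∧ (H ∩ ({x} + H)).Nonempty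
          · obtain ⟨hx0, q, hq⟩ := hx
            have hsx : H ∩ ({x} + H) = {q} := Set.eq_singleton_iff_unique_mem.mpr
              ⟨hq, fun y hy => SID x hx0 hy hq⟩
            obtain ⟨-, hIx⟩ := pairlemma hfin h0 hκ' hH hsx
            have hUfin' : (H ∪ ({x} + H)).Finite := hAfin.union (sadd_fin hAfin)
            have hUx1 : (H ∪ ({x} + H)).ncard + 1 = 2 * n := by
              have h := Set.ncard_union_add_ncard_inter H ({x} + H) hAfin (sadd_fin hAfin)
              rw [hsx, Set.ncard_singleton, sadd_card] at h
              omega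
            have hUxS : ((H ∪ ({x} + H)) + S).ncard + m = 2 * (n + κ) := by
              have h := Set.ncard_union_add_ncard_inter W ({x} + W) hWfin (sadd_fin hWfin)
              rw [hIx, sadd_card, sadd_card, hWcard] at h
              have h1' : (H ∪ ({x} + H)) + S = W ∪ ({x} + W) := by
                rw [Set.union_add, sadd_assoc, ← hWdef]
              rw [h1']
              omega
            by_cases hw : ∃ Y : Set G, Y.Finite ∧ Y.ncard = 2 ∧
                Y ⊆ ((H ∪ ({x} + H)) + S)ᶜ
            · exfalso
              have hUS2 : (H ∪ ({x} + H)) ∈ SkAdd S 2 := ⟨hUfin', by omega, hw⟩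
              have hUfrag : IsFragAdd S 2 (H ∪ ({x} + H)) :=
                frag_of hfin h0 hUS2 (by omega)
              have := faith hfin h0 hH hUfrag
              omega
            · obtain ⟨hCfin', hC1'⟩ := small_of_no2 hw
              have hNc' : ((H ∪ ({x} + H)) + S).ncard +
                  (((H ∪ ({x} + H)) + S)ᶜ).ncard = Nat.card G :=
                Set.ncard_add_ncard_compl _ (Set.toFinite _) (Set.toFinite _)
              rcases (by omega : (((H ∪ ({x} + H)) + S)ᶜ).ncard = 0 ∨
                  (((H ∪ ({x} + H)) + S)ᶜ).ncard = 1) with hc0 | hc1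
              · exfalso; omega
              · obtain ⟨z, hz⟩ := Set.ncard_eq_one.mp hc1
                have hzmem : z ∉ (H ∪ ({x} + H)) + S := by
                  rw [← Set.mem_compl_iff, hz]; rfl
                have hzt : ({z} : Set G) + (-S) ⊆ (H ∪ ({x} + H))ᶜ := gtrick hzmem
                have hUc' : (H ∪ ({x} + H)).ncard + ((H ∪ ({x} + H))ᶜ).ncard = Nat.card G :=
                  Set.ncard_add_ncard_compl _ (Set.toFinite _) (Set.toFinite _)
                have hzW : z ∉ W := fun hzW => hzmem
                  (Set.add_subset_add_right Set.subset_union_left hzW)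
                have hceq : (H ∪ ({x} + H))ᶜ = ({z} : Set G) + (-S) := by
                  apply (Set.eq_of_subset_of_ncard_le hzt ?_ (Set.toFinite _)).symm
                  rw [sadd_card, neg_card]
                  omega
                exact ⟨z, fun _ => ⟨hzW, hceq⟩⟩
          · exact ⟨0, fun h => absurd h hx⟩
        choose ζ hζ using key
        have haD : a ≠ 0 ∧ (H ∩ ({a} + H)).Nonempty := ⟨ha0, a, by rw [hsa]; rfl⟩
        obtain ⟨hzaW, hUa⟩ := hζ a haD
        have hNval : Nat.card G + 1 = 2 * n + m := by
          have hUc : (H ∪ ({a} + H)).ncard + ((H ∪ ({a} + H))ᶜ).ncard = Nat.card G :=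
            Set.ncard_add_ncard_compl _ (Set.toFinite _) (Set.toFinite _)
          rw [hUa, sadd_card, neg_card] at hUc
          omega
        have hWc : W.ncard + (Wᶜ).ncard = Nat.card G :=
          Set.ncard_add_ncard_compl _ (Set.toFinite _) (Set.toFinite _)
        set D := {x : G | x ≠ 0 ∧ (H ∩ ({x} + H)).Nonempty} with hDdef
        have hmaps : ∀ x ∈ D, ζ x ∈ Wᶜ := fun x hx => (hζ x hx).1
        have hinj : Set.InjOn ζ D := by
          intro x hx y hy hxy
          by_contra hne
          have ex := hζ x hx
          have ey := hζ y hy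
          have hUU : H ∪ ({x} + H) = H ∪ ({y} + H) :=
            compl_injective (by rw [ex.2, ey.2, hxy])
          have hsubxy : ({x} : Set G) + H ⊆ H ∪ ({y} + H) := by
            rw [← hUU]; exact Set.subset_union_right
          have hsplit : ({x} : Set G) + H
              = ((({x} : Set G) + H) ∩ H) ∪ ((({x} : Set G) + H) ∩ ({y} + H)) := by
            rw [← Set.inter_union_distrib_left]
            exact (Set.inter_eq_left.mpr hsubxy).symm
          have c1 : ((({x} : Set G) + H) ∩ H).ncard ≤ 1 := by
            rw [Set.inter_comm]
            exact ncard_le_one_of_subsingleton (SID x hx.1)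
          have c2 : ((({x} : Set G) + H) ∩ ({y} + H)).ncard ≤ 1 := by
            have hrw : (({x} : Set G) + H) ∩ ({y} + H)
                = {x} + (H ∩ ({y - x} + H)) := by
              rw [sadd_inter, sadd_sadd, show x + (y - x) = y by abel]
            rw [hrw, sadd_card]
            exact ncard_le_one_of_subsingleton (SID (y - x) (sub_ne_zero.mpr (Ne.symm hne)))
          have hle2 : (({x} : Set G) + H).ncard ≤ 2 := by
            rw [hsplit]
            have := Set.ncard_union_le ((({x} : Set G) + H) ∩ H)
              ((({x} : Set G) + H) ∩ ({y} + H))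
            omega
          rw [sadd_card] at hle2
          omega
        have hDfin : D.Finite := Set.toFinite _
        have hcardD : D.ncard ≤ (Wᶜ).ncard :=
          Set.ncard_le_ncard_of_injOn ζ hmaps hinj (Set.toFinite _)
        obtain ⟨Tset, hTsub, hT3set⟩ := Set.exists_subset_card_eq h3
        obtain ⟨c₁, c₂, c₃, h12, h13, h23, rfl⟩ := Set.ncard_eq_three.mp hT3set
        have hc1A : c₁ ∈ H := hTsub (by simp)
        have hc2A : c₂ ∈ H := hTsub (by simp)
        have hc3A : c₃ ∈ H := hTsub (by simp)
        have hDsub : ∀ c ∈ H, ((({-c} : Set G) + H) \ {0}) ⊆ D := by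
          intro c hc x hx
          obtain ⟨hx1, hx0⟩ := hx
          have hx0' : x ≠ 0 := by simpa using hx0
          have hcx : c + x ∈ H := by
            have := mem_sadd'.mp hx1
            rwa [neg_neg] at this
          exact ⟨hx0', c + x, hcx,
            mem_sadd'.mpr (by rw [show -x + (c + x) = c by abel]; exact hc)⟩
        have hDicard : ∀ c : G, c ∈ H → (((({-c} : Set G) + H) \ {0}).ncard) + 1 = n := by
          intro c hc
          have h0m : (0 : G) ∈ ({-c} : Set G) + H := by
            rw [mem_sadd', show -(-c) + 0 = c by abel]
            exact hc
          have h := Set.ncard_diff_singleton_add_one h0m (sadd_fin hAfin)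
          rw [sadd_card] at h
          omega
        have hdisj : ∀ c c' : G, c ∈ H → c' ∈ H → c ≠ c' →
            Disjoint ((({-c} : Set G) + H) \ {0}) ((({-c'} : Set G) + H) \ {0}) := by
          intro c c' hc hc' hcc'
          rw [Set.disjoint_left]
          rintro x ⟨hx1, hx0⟩ ⟨hx2, -⟩
          have hx0' : x ≠ 0 := by simpa using hx0
          have e1 : c + x ∈ H := by
            have := mem_sadd'.mp hx1; rwa [neg_neg] at this
          have e2 : c' + x ∈ H := by
            have := mem_sadd'.mp hx2; rwa [neg_neg] at this
          have m1 : c + x ∈ H ∩ ({x} + H) :=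
            ⟨e1, mem_sadd'.mpr (by rw [show -x + (c + x) = c by abel]; exact hc)⟩
          have m2 : c' + x ∈ H ∩ ({x} + H) :=
            ⟨e2, mem_sadd'.mpr (by rw [show -x + (c' + x) = c' by abel]; exact hc')⟩
          have heq := SID x hx0' m1 m2
          exact hcc' (add_right_cancel heq)
        have hd12 := hdisj _ _ hc1A hc2A h12
        have hd13 := hdisj _ _ hc1A hc3A h13
        have hd23 := hdisj _ _ hc2A hc3A h23
        have hu12 : (((({-c₁} : Set G) + H) \ {0}) ∪ ((({-c₂} : Set G) + H) \ {0})).ncard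
            = ((({-c₁} : Set G) + H) \ {0}).ncard + ((({-c₂} : Set G) + H) \ {0}).ncard :=
          Set.ncard_union_eq hd12 (Set.toFinite _) (Set.toFinite _)
        have hu123 : ((((({-c₁} : Set G) + H) \ {0}) ∪ ((({-c₂} : Set G) + H) \ {0}))
              ∪ ((({-c₃} : Set G) + H) \ {0})).ncard
            = (((({-c₁} : Set G) + H) \ {0}) ∪ ((({-c₂} : Set G) + H) \ {0})).ncard
              + ((({-c₃} : Set G) + H) \ {0}).ncard :=
          Set.ncard_union_eq (Set.disjoint_union_left.mpr ⟨hd13, hd23⟩)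
            (Set.toFinite _) (Set.toFinite _)
        have hsubD : ((((({-c₁} : Set G) + H) \ {0}) ∪ ((({-c₂} : Set G) + H) \ {0}))
              ∪ ((({-c₃} : Set G) + H) \ {0})) ⊆ D :=
          Set.union_subset (Set.union_subset (hDsub _ hc1A) (hDsub _ hc2A)) (hDsub _ hc3A)
        have hleD := Set.ncard_le_ncard hsubD hDfin
        have hi1 := hDicard c₁ hc1A
        have hi2 := hDicard c₂ hc2A
        have hi3 := hDicard c₃ hc3A
        omega
      · -- Case II : exactly one element outside V + S
        obtain ⟨g, hg⟩ := Set.ncard_eq_one.mp h1c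
        have hgmem : g ∉ V + S := by rw [← Set.mem_compl_iff, hg]; rfl
        have hgt : ({g} : Set G) + (-S) ⊆ Vᶜ := gtrick hgmem
        have hVc : V.ncard + (Vᶜ).ncard = Nat.card G :=
          Set.ncard_add_ncard_compl _ (Set.toFinite _) (Set.toFinite _)
        have hmle : m ≤ (Vᶜ).ncard := by
          have hc : (({g} : Set G) + (-S)).ncard = m := by rw [sadd_card, neg_card]
          rw [← hc]; exact Set.ncard_le_ncard hgt (Set.toFinite _)
        have hXc : (({a, b} : Set G) + S).ncard + ((({a, b} : Set G) + S)ᶜ).ncard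
            = Nat.card G :=
          Set.ncard_add_ncard_compl _ (Set.toFinite _) (Set.toFinite _)
        have h2c : 2 ≤ ((({a, b} : Set G) + S)ᶜ).ncard := by omega
        obtain ⟨Y, hYsub, hY2⟩ := Set.exists_subset_card_eq h2c
        exact hdone ⟨Y, Set.toFinite _, hY2, hYsub⟩ (by omega)
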